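/- arXiv:1805.00746 — 2 statements merged into one kernel-verified Lean document; each statement's English description precedes it below -/
import Mathlib

section
/- Let n = 2 with coordinates (p,q) on U = ℝ². Define the metric g₁₁ = q² + 1, g₁₂ = g₂₁ = −p q, g₂₂ = p² + 1 (so that det g = p² + q² + 1 > 0 everywhere), define c_{ijk} := (1/3)(∂_j g_{ik} − ∂_k g_{ij}), and define the skew-symmetric field w by w₁₂ = −w₂₁ = 1/√(p² + q² + 1), w₁₁ = w₂₂ = 0. Then the triple (g, c, w) satisfies conditions (cond1) on ℝ². (This is the Hamiltonian structure underlying the so(3) Wadati–Konno–Ishikawa hierarchy.) -/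
open scoped BigOperators

/-- Partial derivative `∂_k f` in the `k`-th coordinate direction. -/
noncomputable def pd {n : ℕ} (k : Fin n) (f : (Fin n → ℝ) → ℝ) (u : Fin n → ℝ) : ℝ :=
  fderiv ℝ f u (Pi.single k 1)

/-- Conditions (cond1) for a triple `(g, c, w)` on a set `U ⊆ ℝⁿ`:
`g` is the (lower-index) metric `g_{ij}`, `c` are the lowered coefficients `c_{ijk}`,
`w` is the skew-symmetric 2-form `w_{ij}`, and `c^s_{jk} := g^{si} c_{ijk}` is computed
via the pointwise inverse matrix `(g u)⁻¹`. -/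
def Cond1 {n : ℕ} (U : Set (Fin n → ℝ))
    (g : (Fin n → ℝ) → Matrix (Fin n) (Fin n) ℝ)
    (c : (Fin n → ℝ) → Fin n → Fin n → Fin n → ℝ)
    (w : (Fin n → ℝ) → Matrix (Fin n) (Fin n) ℝ) : Prop :=
  ∀ u ∈ U,
    (∀ i j k, pd k (fun x => g x i j) u + c u i j k + c u j i k = 0) ∧
    (∀ i j k, c u i j k + c u i k j = 0) ∧
    (∀ i j k, pd k (fun x => g x i j) u + pd i (fun x => g x j k) u
        + pd j (fun x => g x k i) u = 0) ∧
    (∀ i j, w u i j + w u j i = 0) ∧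
    (∀ i j l, pd l (fun x => w x i j) u
        = ∑ s, (∑ a, (g u)⁻¹ s a * c u a i j) * w u s l) ∧
    (∀ m l p k, pd k (fun x => c x p m l) u
        + ∑ s, (∑ a, (g u)⁻¹ s a * c u a m l) * c u s p k + w u m l * w u p k = 0)

lemma pd_of_hasFDerivAt {n : ℕ} {f : (Fin n → ℝ) → ℝ} {u : Fin n → ℝ}
    {L : (Fin n → ℝ) →L[ℝ] ℝ} (h : HasFDerivAt f L u) (k : Fin n) :
    pd k f u = L (Pi.single k 1) := by rw [pd, h.fderiv]

lemma hasF_coord {n : ℕ} (i : Fin n) (u : Fin n → ℝ) :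
    HasFDerivAt (fun x : Fin n → ℝ => x i)
      (ContinuousLinearMap.proj (R := ℝ) (φ := fun _ : Fin n => ℝ) i) u :=
  (ContinuousLinearMap.proj (R := ℝ) (φ := fun _ : Fin n => ℝ) i).hasFDerivAt

lemma pd_coord {n : ℕ} (i k : Fin n) (u : Fin n → ℝ) :
    pd k (fun x => x i) u = if i = k then 1 else 0 := by
  rw [pd_of_hasFDerivAt (hasF_coord i u)]
  simp [Pi.single_apply, eq_comm]

lemma pd_const {n : ℕ} (k : Fin n) (a : ℝ) (u : Fin n → ℝ) :
    pd k (fun _ => a) u = 0 := by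
  rw [pd, fderiv_fun_const]; simp

lemma pd_neg_coord {n : ℕ} (i k : Fin n) (u : Fin n → ℝ) :
    pd k (fun x => -(x i)) u = if i = k then -1 else 0 := by
  rw [pd_of_hasFDerivAt (hasF_coord i u).fun_neg]
  simp [Pi.single_apply, eq_comm]
  split <;> simp

lemma pdA0 (u : Fin 2 → ℝ) : pd 0 (fun x : Fin 2 → ℝ => (x 1)^2 + 1) u = 0 := by
  have h2 : (fun x : Fin 2 → ℝ => (x 1)^2 + 1) = fun x => x 1 * x 1 + 1 := by
    funext x; ring
  rw [h2, pd_of_hasFDerivAt (((hasF_coord 1 u).fun_mul (hasF_coord 1 u)).add_const 1)]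
  simp [Pi.single_apply]

lemma pdA1 (u : Fin 2 → ℝ) : pd 1 (fun x : Fin 2 → ℝ => (x 1)^2 + 1) u = 2 * u 1 := by
  have h2 : (fun x : Fin 2 → ℝ => (x 1)^2 + 1) = fun x => x 1 * x 1 + 1 := by
    funext x; ring
  rw [h2, pd_of_hasFDerivAt (((hasF_coord 1 u).fun_mul (hasF_coord 1 u)).add_const 1)]
  simp [Pi.single_apply]; ring

lemma pdB0 (u : Fin 2 → ℝ) : pd 0 (fun x : Fin 2 → ℝ => -(x 0 * x 1)) u = -(u 1) := by
  rw [pd_of_hasFDerivAt ((hasF_coord 0 u).fun_mul (hasF_coord 1 u)).fun_neg]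
  simp [Pi.single_apply]

lemma pdB1 (u : Fin 2 → ℝ) : pd 1 (fun x : Fin 2 → ℝ => -(x 0 * x 1)) u = -(u 0) := by
  rw [pd_of_hasFDerivAt ((hasF_coord 0 u).fun_mul (hasF_coord 1 u)).fun_neg]
  simp [Pi.single_apply]

lemma pdC0 (u : Fin 2 → ℝ) : pd 0 (fun x : Fin 2 → ℝ => (x 0)^2 + 1) u = 2 * u 0 := by
  have h2 : (fun x : Fin 2 → ℝ => (x 0)^2 + 1) = fun x => x 0 * x 0 + 1 := by
    funext x; ring
  rw [h2, pd_of_hasFDerivAt (((hasF_coord 0 u).fun_mul (hasF_coord 0 u)).add_const 1)]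
  simp [Pi.single_apply]; ring

lemma pdC1 (u : Fin 2 → ℝ) : pd 1 (fun x : Fin 2 → ℝ => (x 0)^2 + 1) u = 0 := by
  have h2 : (fun x : Fin 2 → ℝ => (x 0)^2 + 1) = fun x => x 0 * x 0 + 1 := by
    funext x; ring
  rw [h2, pd_of_hasFDerivAt (((hasF_coord 0 u).fun_mul (hasF_coord 0 u)).add_const 1)]
  simp [Pi.single_apply]

lemma pdW (k : Fin 2) (u : Fin 2 → ℝ) :
    pd k (fun x : Fin 2 → ℝ => 1 / Real.sqrt ((x 0)^2 + (x 1)^2 + 1)) u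
      = -(u k) / Real.sqrt ((u 0)^2 + (u 1)^2 + 1) ^ 3 := by
  have hD0 : (0:ℝ) < u 0 * u 0 + u 1 * u 1 + 1 := by
    nlinarith [mul_self_nonneg (u 0), mul_self_nonneg (u 1)]
  have hsp : (0:ℝ) < Real.sqrt (u 0 * u 0 + u 1 * u 1 + 1) := Real.sqrt_pos.mpr hD0
  have hfun : (fun x : Fin 2 → ℝ => 1 / Real.sqrt ((x 0)^2 + (x 1)^2 + 1))
      = fun x => (Real.sqrt (x 0 * x 0 + x 1 * x 1 + 1))⁻¹ := by
    funext x; rw [one_div]; ring_nf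
  have hD := (((hasF_coord 0 u).fun_mul (hasF_coord 0 u)).fun_add
      ((hasF_coord 1 u).fun_mul (hasF_coord 1 u))).add_const 1
  have h1 := (Real.hasDerivAt_sqrt hD0.ne').fun_inv hsp.ne'
  have hinv := h1.comp_hasFDerivAt u hD
  simp only [Function.comp_def] at hinv
  rw [hfun, pd_of_hasFDerivAt hinv k]
  have hmss : Real.sqrt (u 0 * u 0 + u 1 * u 1 + 1) ^ 2 = u 0 * u 0 + u 1 * u 1 + 1 :=
    Real.sq_sqrt hD0.le
  have h3 : Real.sqrt ((u 0)^2 + (u 1)^2 + 1) ^ 3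
      = (u 0 * u 0 + u 1 * u 1 + 1) * Real.sqrt (u 0 * u 0 + u 1 * u 1 + 1) := by
    have h : (u 0:ℝ)^2 + (u 1)^2 + 1 = u 0 * u 0 + u 1 * u 1 + 1 := by ring
    rw [h, show (3:ℕ) = 2 + 1 from rfl, pow_succ, hmss]
  rw [h3]
  simp [Pi.single_apply]
  fin_cases k <;> simp <;> field_simp <;> ring_nf
  all_goals
    rw [Real.sq_sqrt]
    · ring
    · positivity

lemma pdWneg (k : Fin 2) (u : Fin 2 → ℝ) :
    pd k (fun x : Fin 2 → ℝ => -(1 / Real.sqrt ((x 0)^2 + (x 1)^2 + 1))) u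
      = u k / Real.sqrt ((u 0)^2 + (u 1)^2 + 1) ^ 3 := by
  have hD0 : (0:ℝ) < u 0 * u 0 + u 1 * u 1 + 1 := by
    nlinarith [mul_self_nonneg (u 0), mul_self_nonneg (u 1)]
  have hsp : (0:ℝ) < Real.sqrt (u 0 * u 0 + u 1 * u 1 + 1) := Real.sqrt_pos.mpr hD0
  have hfun : (fun x : Fin 2 → ℝ => -(1 / Real.sqrt ((x 0)^2 + (x 1)^2 + 1)))
      = fun x => -((Real.sqrt (x 0 * x 0 + x 1 * x 1 + 1))⁻¹) := by
    funext x; rw [one_div]; ring_nf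
  have hD := (((hasF_coord 0 u).fun_mul (hasF_coord 0 u)).fun_add
      ((hasF_coord 1 u).fun_mul (hasF_coord 1 u))).add_const 1
  have h1 := (Real.hasDerivAt_sqrt hD0.ne').fun_inv hsp.ne'
  have hinv := (h1.comp_hasFDerivAt u hD).fun_neg
  simp only [Function.comp_def] at hinv
  rw [hfun, pd_of_hasFDerivAt hinv k]
  have hmss : Real.sqrt (u 0 * u 0 + u 1 * u 1 + 1) ^ 2 = u 0 * u 0 + u 1 * u 1 + 1 :=
    Real.sq_sqrt hD0.le
  have h3 : Real.sqrt ((u 0)^2 + (u 1)^2 + 1) ^ 3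
      = (u 0 * u 0 + u 1 * u 1 + 1) * Real.sqrt (u 0 * u 0 + u 1 * u 1 + 1) := by
    have h : (u 0:ℝ)^2 + (u 1)^2 + 1 = u 0 * u 0 + u 1 * u 1 + 1 := by ring
    rw [h, show (3:ℕ) = 2 + 1 from rfl, pow_succ, hmss]
  rw [h3]
  simp [Pi.single_apply]
  fin_cases k <;> simp <;> field_simp <;> ring_nf
  all_goals
    rw [Real.sq_sqrt]
    · ring
    · positivity

set_option maxHeartbeats 2000000 in
/-- the WKI (so(3) Wadati–Konno–Ishikawa) structure: on `ℝ²` with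
`(p,q) = (u 0, u 1)`, the metric `g = !![q²+1, −pq; −pq, p²+1]` (with
`det g = p²+q²+1 > 0`), `c_{ijk} = (1/3)(∂_j g_{ik} − ∂_k g_{ij})` and the skew form
`w₁₂ = 1/√(p²+q²+1)` satisfy conditions (cond1). -/
theorem wki_satisfies_cond1
    (g : (Fin 2 → ℝ) → Matrix (Fin 2) (Fin 2) ℝ)
    (hg : g = fun u => !![(u 1) ^ 2 + 1, -(u 0 * u 1); -(u 0 * u 1), (u 0) ^ 2 + 1])
    (c : (Fin 2 → ℝ) → Fin 2 → Fin 2 → Fin 2 → ℝ)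
    (hc : c = fun u i j k =>
      (1 / 3) * (pd j (fun x => g x i k) u - pd k (fun x => g x i j) u))
    (w : (Fin 2 → ℝ) → Matrix (Fin 2) (Fin 2) ℝ)
    (hw : w = fun u => !![0, 1 / Real.sqrt ((u 0) ^ 2 + (u 1) ^ 2 + 1);
                          -(1 / Real.sqrt ((u 0) ^ 2 + (u 1) ^ 2 + 1)), 0]) :
    (∀ u : Fin 2 → ℝ, (g u).det = (u 0) ^ 2 + (u 1) ^ 2 + 1 ∧ 0 < (g u).det) ∧
    Cond1 (Set.univ : Set (Fin 2 → ℝ)) g c w := by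
  have hdet : ∀ u : Fin 2 → ℝ, (g u).det = (u 0) ^ 2 + (u 1) ^ 2 + 1 := by
    intro u; rw [hg]; simp [Matrix.det_fin_two_of]; ring
  -- derivatives of the metric entries
  have hgE : ∀ (x : Fin 2 → ℝ) (i j k : Fin 2), pd k (fun y => g y i j) x
      = ![![![0, 2 * x 1], ![-(x 1), -(x 0)]],
          ![![-(x 1), -(x 0)], ![2 * x 0, 0]]] i j k := by
    intro x i j k
    fin_cases i <;> fin_cases j <;> fin_cases k <;>
      simp [hg, pdA0, pdA1, pdB0, pdB1, pdC0, pdC1]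
  -- values of c
  have hcE : ∀ (x : Fin 2 → ℝ) (i j k : Fin 2), c x i j k
      = ![![![0, -(x 1)], ![x 1, 0]], ![![0, x 0], ![-(x 0), 0]]] i j k := by
    intro x i j k
    rw [hc]
    simp only [hgE]
    fin_cases i <;> fin_cases j <;> fin_cases k <;> norm_num <;> ring_nf
  have hcF : ∀ i j k : Fin 2, (fun x => c x i j k)
      = fun x : Fin 2 → ℝ =>
          ![![![(0:ℝ), -(x 1)], ![x 1, 0]], ![![0, x 0], ![-(x 0), 0]]] i j k :=
    fun i j k => funext fun x => hcE x i j k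
  -- values of w
  have hwE : ∀ (x : Fin 2 → ℝ) (i j : Fin 2), w x i j
      = ![![0, 1 / Real.sqrt ((x 0)^2 + (x 1)^2 + 1)],
          ![-(1 / Real.sqrt ((x 0)^2 + (x 1)^2 + 1)), 0]] i j := by
    intro x i j
    rw [hw]
    fin_cases i <;> fin_cases j <;> simp
  have hwF : ∀ i j : Fin 2, (fun x => w x i j)
      = fun x : Fin 2 → ℝ =>
          ![![0, 1 / Real.sqrt ((x 0)^2 + (x 1)^2 + 1)],
            ![-(1 / Real.sqrt ((x 0)^2 + (x 1)^2 + 1)), 0]] i j :=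
    fun i j => funext fun x => hwE x i j
  constructor
  · intro u
    refine ⟨hdet u, ?_⟩
    rw [hdet u]; positivity
  intro u _
  have hD0 : (0:ℝ) < (u 0)^2 + (u 1)^2 + 1 := by positivity
  have hs0 : Real.sqrt ((u 0)^2 + (u 1)^2 + 1) ≠ 0 := (Real.sqrt_pos.mpr hD0).ne'
  have hs2 : Real.sqrt ((u 0)^2 + (u 1)^2 + 1) ^ 2 = (u 0)^2 + (u 1)^2 + 1 :=
    Real.sq_sqrt hD0.le
  have hs3 : Real.sqrt ((u 0)^2 + (u 1)^2 + 1) ^ 3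
      = ((u 0)^2 + (u 1)^2 + 1) * Real.sqrt ((u 0)^2 + (u 1)^2 + 1) := by
    rw [show (3:ℕ) = 2 + 1 from rfl, pow_succ, hs2]
  have hA : 1 / Real.sqrt ((u 0)^2 + (u 1)^2 + 1) * (1 / Real.sqrt ((u 0)^2 + (u 1)^2 + 1))
      = (((u 0)^2 + (u 1)^2 + 1))⁻¹ := by
    rw [div_mul_div_comm, one_mul, Real.mul_self_sqrt hD0.le, one_div]
  have hB : 1 / Real.sqrt ((u 0)^2 + (u 1)^2 + 1) * -(1 / Real.sqrt ((u 0)^2 + (u 1)^2 + 1))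
      = -((((u 0)^2 + (u 1)^2 + 1))⁻¹) := by rw [mul_neg, hA]
  have hC : -(1 / Real.sqrt ((u 0)^2 + (u 1)^2 + 1)) * (1 / Real.sqrt ((u 0)^2 + (u 1)^2 + 1))
      = -((((u 0)^2 + (u 1)^2 + 1))⁻¹) := by rw [neg_mul, hA]
  have hD2 : -(1 / Real.sqrt ((u 0)^2 + (u 1)^2 + 1)) * -(1 / Real.sqrt ((u 0)^2 + (u 1)^2 + 1))
      = (((u 0)^2 + (u 1)^2 + 1))⁻¹ := by rw [neg_mul_neg, hA]
  have hginv : (g u)⁻¹ = (((u 0)^2 + (u 1)^2 + 1)⁻¹) •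
      !![(u 0)^2 + 1, u 0 * u 1; u 0 * u 1, (u 1)^2 + 1] := by
    rw [hg]
    apply Matrix.inv_eq_right_inv
    ext i j
    fin_cases i <;> fin_cases j <;>
      (simp [Matrix.mul_apply, Fin.sum_univ_two]; field_simp; ring)
  refine ⟨?_, ?_, ?_, ?_, ?_, ?_⟩
  · intro i j k
    fin_cases i <;> fin_cases j <;> fin_cases k <;> simp [hgE, hcE] <;> ring
  · intro i j k
    fin_cases i <;> fin_cases j <;> fin_cases k <;> simp [hcE] <;> ring
  · intro i j k
    fin_cases i <;> fin_cases j <;> fin_cases k <;> simp [hgE] <;> ring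
  · intro i j
    fin_cases i <;> fin_cases j <;> simp [hwE]
  · intro i j l
    fin_cases i <;> fin_cases j <;> fin_cases l <;>
      simp only [hwF, hginv, hcE, hwE, Fin.sum_univ_two, Matrix.smul_apply,
        smul_eq_mul, Matrix.cons_val', Matrix.cons_val_zero, Matrix.cons_val_one,
        Matrix.head_cons, Matrix.empty_val', Matrix.cons_val_fin_one, Matrix.head_fin_const,
        Matrix.of_apply, Fin.isValue, Fin.mk_zero, Fin.mk_one]
    all_goals first
      | (rw [pd_const]; ring)
      | (rw [pdW, hs3]; field_simp [hs0, hD0.ne']; ring)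
      | (rw [pdWneg, hs3]; field_simp [hs0, hD0.ne']; ring)
  · intro m l p k
    fin_cases m <;> fin_cases l <;> fin_cases p <;> fin_cases k <;>
      simp only [hcF, hginv, hcE, hwE, Fin.sum_univ_two, Matrix.smul_apply,
        smul_eq_mul, Matrix.cons_val', Matrix.cons_val_zero, Matrix.cons_val_one,
        Matrix.head_cons, Matrix.empty_val', Matrix.cons_val_fin_one, Matrix.head_fin_const,
        Matrix.of_apply, Fin.isValue, Fin.mk_zero, Fin.mk_one]
    all_goals simp only [pd_coord, pd_neg_coord, pd_const, hA, hB, hC, hD2]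
    all_goals norm_num
    all_goals (try field_simp [hD0.ne'])
    all_goals (try ring)
end

section
/- Let U ⊆ ℝⁿ be open, let c^s_{ij} : U → ℝ (i,j,s ∈ {1,…,n}) be continuously differentiable functions, and let w_{ij} : U → ℝ be twice continuously differentiable functions satisfying the linear system ∂_l w_{ij} = c^s_{ij} w_{sl} for all i,j,l ∈ {1,…,n} (summation over the repeated index s). Then the compatibility conditions ∂_k ∂_l w_{ij} = ∂_l ∂_k w_{ij} force, for all indices i,j,k,s ∈ {1,…,n}: (∂_k c^p_{ij} − c^q_{ij} c^p_{qk}) w_{ps} = (∂_s c^p_{ij} − c^q_{ij} c^p_{qs}) w_{pk} (summation over the repeated indices p and q). -/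
open scoped BigOperators

lemma pd_mul {n : ℕ} {g h : (Fin n → ℝ) → ℝ} {u : Fin n → ℝ}
    (hg : DifferentiableAt ℝ g u) (hh : DifferentiableAt ℝ h u) (k : Fin n) :
    pd k (fun x => g x * h x) u = pd k g u * h u + g u * pd k h u := by
  simp only [pd]
  rw [fderiv_fun_mul hg hh]
  simp only [ContinuousLinearMap.add_apply, ContinuousLinearMap.smul_apply, smul_eq_mul]
  ring

lemma pd_sum {n : ℕ} {ι : Type*} (t : Finset ι) {F : ι → (Fin n → ℝ) → ℝ} {u : Fin n → ℝ}
    (hF : ∀ p ∈ t, DifferentiableAt ℝ (F p) u) (k : Fin n) :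
    pd k (fun x => ∑ p ∈ t, F p x) u = ∑ p ∈ t, pd k (F p) u := by
  simp only [pd]
  rw [fderiv_fun_sum hF]
  simp

lemma pd_pd_symm {n : ℕ} {f : (Fin n → ℝ) → ℝ} {U : Set (Fin n → ℝ)} {u : Fin n → ℝ}
    (hU : IsOpen U) (hu : u ∈ U) (hf : ContDiffOn ℝ 2 f U) (k s : Fin n) :
    pd k (fun x => pd s f x) u = pd s (fun x => pd k f x) u := by
  have hfa : ContDiffAt ℝ 2 f u := hf.contDiffAt (hU.mem_nhds hu)
  have hsym := hfa.isSymmSndFDerivAt (by simp [minSmoothness_of_isRCLikeNormedField])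
  have hdf : DifferentiableAt ℝ (fderiv ℝ f) u := by
    have : ContDiffAt ℝ 1 (fderiv ℝ f) u := hfa.fderiv_right (by norm_num)
    exact this.differentiableAt one_ne_zero
  have key : ∀ a b : Fin n, pd a (fun x => pd b f x) u
      = fderiv ℝ (fderiv ℝ f) u (Pi.single a 1) (Pi.single b 1) := by
    intro a b
    simp only [pd]
    rw [fderiv_clm_apply hdf (differentiableAt_const _)]
    simp
  rw [key, key, hsym]

/-- if `w_{ij}` (C²) satisfies the linear system `∂_l w_{ij} = c^s_{ij} w_{sl}`
with `c^s_{ij}` of class C¹, then the compatibility conditions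
`∂_k ∂_l w_{ij} = ∂_l ∂_k w_{ij}` force the linear algebraic system
`(∂_k c^p_{ij} − c^q_{ij} c^p_{qk}) w_{ps} = (∂_s c^p_{ij} − c^q_{ij} c^p_{qs}) w_{pk}`. -/
theorem compatibility_linear_system {n : ℕ} (U : Set (Fin n → ℝ)) (hU : IsOpen U)
    (c : (Fin n → ℝ) → Fin n → Fin n → Fin n → ℝ)
    (w : (Fin n → ℝ) → Matrix (Fin n) (Fin n) ℝ)
    (hc : ∀ s i j, ContDiffOn ℝ 1 (fun u => c u s i j) U)
    (hw : ∀ i j, ContDiffOn ℝ 2 (fun u => w u i j) U)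
    (hlin : ∀ u ∈ U, ∀ i j l,
      pd l (fun x => w x i j) u = ∑ s, c u s i j * w u s l) :
    ∀ u ∈ U, ∀ i j k s,
      ∑ p, (pd k (fun x => c x p i j) u - ∑ q, c u q i j * c u p q k) * w u p s
        = ∑ p, (pd s (fun x => c x p i j) u - ∑ q, c u q i j * c u p q s) * w u p k := by
  intro u hu i j k s
  have hnu : U ∈ nhds u := hU.mem_nhds hu
  have hcd : ∀ p i' j', DifferentiableAt ℝ (fun x => c x p i' j') u := fun p i' j' =>
    ((hc p i' j').contDiffAt hnu).differentiableAt one_ne_zero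
  have hwd : ∀ i' j', DifferentiableAt ℝ (fun x => w x i' j') u := fun i' j' =>
    ((hw i' j').contDiffAt hnu).differentiableAt two_ne_zero
  -- compute the mixed second partials
  have hstep : ∀ k' s' : Fin n,
      pd k' (fun x => pd s' (fun y => w y i j) x) u
        = ∑ p, pd k' (fun x => c x p i j) u * w u p s'
          + ∑ p, c u p i j * ∑ q, c u q p s' * w u q k' := by
    intro k' s'
    have heq : (fun x => pd s' (fun y => w y i j) x)
        =ᶠ[nhds u] (fun x => ∑ p, c x p i j * w x p s') := by
      filter_upwards [hnu] with x hx
      exact hlin x hx i j s'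
    have h1 : pd k' (fun x => pd s' (fun y => w y i j) x) u
        = pd k' (fun x => ∑ p, c x p i j * w x p s') u :=
      congrArg (fun L : (Fin n → ℝ) →L[ℝ] ℝ => L (Pi.single k' 1)) heq.fderiv_eq
    rw [h1, pd_sum Finset.univ (fun p _ => ((hcd p i j).fun_mul (hwd p s')))]
    rw [Finset.sum_congr rfl (fun p _ => pd_mul (hcd p i j) (hwd p s') k')]
    rw [Finset.sum_add_distrib]
    congr 1
    refine Finset.sum_congr rfl fun p _ => ?_
    rw [hlin u hu p s' k']
  have hsym := pd_pd_symm hU hu (hw i j) k s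
  rw [hstep k s, hstep s k] at hsym
  have hswap : ∀ k' s' : Fin n,
      ∑ p, ∑ q, c u q i j * c u p q k' * w u p s'
        = ∑ p, c u p i j * ∑ q, c u q p k' * w u q s' := by
    intro k' s'
    rw [Finset.sum_comm]
    refine Finset.sum_congr rfl fun p _ => ?_
    rw [Finset.mul_sum]
    exact Finset.sum_congr rfl fun q _ => by ring
  simp only [sub_mul, Finset.sum_sub_distrib, Finset.sum_mul]
  rw [hswap, hswap]
  linarith [hsym]
end
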